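/- Let r, g : ℝ^d → ℝ ∪ {∞} be closed convex proper, f : ℝ^d → ℝ convex differentiable with L-Lipschitz gradient, and 0 < α < 3/(2L). With p(z) defined as p(z) = (1/α)(prox_{αr}(z) − prox_{αg}(2·prox_{αr}(z) − z − α∇f(prox_{αr}(z)))), for any z, z̃: −⟨p(z) − p(z̃), z − z̃⟩ ≤ α(αL/3 − 1)‖p(z) − p(z̃)‖² − (1/(4L))‖∇f(x) − ∇f(x̃)‖², where x = prox_{αr}(z), x̃ = prox_{αr}(z̃). -/

import Mathlib

open Set Filter Topology
open scoped RealInnerProductSpace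

noncomputable section

/-- `f` is closed (lower semicontinuous), convex, and proper
as an extended-real-valued function. -/
def ClosedConvexProper {E : Type*} [NormedAddCommGroup E] [NormedSpace ℝ E]
    (f : E → EReal) : Prop :=
  LowerSemicontinuous f ∧
  (∀ (a b : ℝ) (x y : E), 0 ≤ a → 0 ≤ b → a + b = 1 →
    f (a • x + b • y) ≤ (a : EReal) * f x + (b : EReal) * f y) ∧
  (∀ x, f x ≠ ⊥) ∧ (∃ x, f x ≠ ⊤)

/-- `p` is a minimizer of the prox objective of the extended-real-valued `f` at `x₀`. -/
def IsProxPt {E : Type*} [NormedAddCommGroup E] [InnerProductSpace ℝ E]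
    (f : E → EReal) (x₀ p : E) : Prop :=
  IsMinOn (fun x => f x + ((1 / 2 * ‖x - x₀‖ ^ 2 : ℝ) : EReal)) Set.univ p

/-- `p` is a minimizer of the prox objective of the real-valued `f` at `x₀`. -/
def IsProxPtR {E : Type*} [NormedAddCommGroup E] [InnerProductSpace ℝ E]
    (f : E → ℝ) (x₀ p : E) : Prop :=
  IsMinOn (fun x => f x + 1 / 2 * ‖x - x₀‖ ^ 2) Set.univ p

section Helpers

variable {E : Type*} [NormedAddCommGroup E] [InnerProductSpace ℝ E]

lemma line_hasDerivAt' [CompleteSpace E] (f : E → ℝ) (f' : E → E)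
    (hf' : ∀ x, HasGradientAt f (f' x) x) (x v : E) (t : ℝ) :
    HasDerivAt (fun s : ℝ => f (x + s • v)) ⟪f' (x + t • v), v⟫ t := by
  have hc : HasDerivAt (fun s : ℝ => x + s • v) v t := by
    simpa using ((hasDerivAt_id t).smul_const v).const_add x
  have hfd : HasFDerivAt f (InnerProductSpace.toDual ℝ E (f' (x + t • v))) (x + t • v) :=
    (hf' (x + t • v))
  have := hfd.comp_hasDerivAt t hc
  simpa [InnerProductSpace.toDual_apply_apply, Function.comp_def] using this

lemma grad_convex_lower' [CompleteSpace E] (f : E → ℝ) (hfconv : ConvexOn ℝ Set.univ f)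
    (f' : E → E) (hf' : ∀ x, HasGradientAt f (f' x) x) (x y : E) :
    f x + ⟪f' x, y - x⟫ ≤ f y := by
  set v := y - x with hv
  have hg : ConvexOn ℝ Set.univ (fun s : ℝ => f (x + s • v)) := by
    have := hfconv.comp_affineMap (AffineMap.const ℝ ℝ x +
      LinearMap.toAffineMap (LinearMap.smulRight (LinearMap.id : ℝ →ₗ[ℝ] ℝ) v))
    simpa [Set.preimage_univ, Function.comp_def] using this
  have hd := line_hasDerivAt' f f' hf' x v 0
  have hle := hg.le_slope_of_hasDerivAt (Set.mem_univ (0:ℝ)) (Set.mem_univ (1:ℝ))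
    (by norm_num) (by simpa using hd)
  have hslope : slope (fun s : ℝ => f (x + s • v)) 0 1 = f (x + v) - f x := by
    simp [slope_def_field]
  rw [hslope] at hle
  have : x + v = y := by rw [hv]; abel
  rw [this] at hle
  linarith [hle]

lemma descent_lemma' [CompleteSpace E] (f : E → ℝ)
    (f' : E → E) (hf' : ∀ x, HasGradientAt f (f' x) x)
    (L : ℝ) (hL : 0 < L) (hLip : ∀ x y, ‖f' x - f' y‖ ≤ L * ‖x - y‖) (x y : E) :
    f y ≤ f x + ⟪f' x, y - x⟫ + L / 2 * ‖y - x‖ ^ 2 := by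
  set v := y - x with hv
  set φ : ℝ → ℝ := fun t => f (x + t • v) - t * ⟪f' x, v⟫ - L / 2 * t ^ 2 * ‖v‖ ^ 2 with hφ
  have hder : ∀ t : ℝ, HasDerivAt φ (⟪f' (x + t • v), v⟫ - ⟪f' x, v⟫ - L * t * ‖v‖ ^ 2) t := by
    intro t
    have h1 := line_hasDerivAt' f f' hf' x v t
    have h2 : HasDerivAt (fun t : ℝ => t * ⟪f' x, v⟫) ⟪f' x, v⟫ t := by
      simpa using (hasDerivAt_id t).mul_const ⟪f' x, v⟫
    have h3 : HasDerivAt (fun t : ℝ => L / 2 * t ^ 2 * ‖v‖ ^ 2) (L * t * ‖v‖ ^ 2) t := by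
      have h4 : HasDerivAt (fun t : ℝ => t ^ 2) (2 * t) t := by
        simpa using hasDerivAt_pow 2 t
      have := (h4.const_mul (L / 2)).mul_const (‖v‖ ^ 2)
      exact this.congr_deriv (by ring)
    exact (h1.sub h2).sub h3
  have hanti : AntitoneOn φ (Set.Icc (0:ℝ) 1) := by
    apply antitoneOn_of_deriv_nonpos (convex_Icc 0 1)
    · have hcont : Continuous φ :=
        Differentiable.continuous (fun t => (hder t).differentiableAt)
      exact hcont.continuousOn
    · intro t ht; exact ((hder t).differentiableAt).differentiableWithinAt
    · intro t ht
      rw [interior_Icc] at ht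
      rw [(hder t).deriv]
      have hb : ⟪f' (x + t • v) - f' x, v⟫ ≤ L * t * ‖v‖ ^ 2 := by
        calc ⟪f' (x + t • v) - f' x, v⟫ ≤ ‖f' (x + t • v) - f' x‖ * ‖v‖ :=
              real_inner_le_norm _ _
          _ ≤ (L * ‖(x + t • v) - x‖) * ‖v‖ := by
              gcongr; exact hLip _ _
          _ = L * t * ‖v‖ ^ 2 := by
              have : ‖(x + t • v) - x‖ = t * ‖v‖ := by
                simp [norm_smul, abs_of_pos ht.1]
              rw [this]; ring
      have := inner_sub_left (𝕜 := ℝ) (f' (x + t • v)) (f' x) v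
      rw [this] at hb
      linarith
  have h01 := hanti (Set.mem_Icc.2 ⟨le_refl 0, by norm_num⟩)
    (Set.mem_Icc.2 ⟨by norm_num, le_refl 1⟩) zero_le_one
  have hxy : x + (1:ℝ) • v = y := by simp [hv]
  simp only [hφ, hxy, zero_smul, add_zero, zero_pow, one_pow] at h01
  norm_num at h01
  linarith

lemma baillon_haddad' [CompleteSpace E] (f : E → ℝ) (hfconv : ConvexOn ℝ Set.univ f)
    (f' : E → E) (hf' : ∀ x, HasGradientAt f (f' x) x)
    (L : ℝ) (hL : 0 < L) (hLip : ∀ x y, ‖f' x - f' y‖ ≤ L * ‖x - y‖) (x y : E) :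
    1 / L * ‖f' x - f' y‖ ^ 2 ≤ ⟪f' x - f' y, x - y⟫ := by
  have key : ∀ a b : E, f a + ⟪f' a, b - a⟫ + 1 / (2 * L) * ‖f' b - f' a‖ ^ 2 ≤ f b := by
    intro a b
    set gv := f' b - f' a with hgv
    set c := b - (1 / L) • gv with hc
    have h1 := grad_convex_lower' f hfconv f' hf' a c
    have h2 := descent_lemma' f f' hf' L hL hLip b c
    have hcb : c - b = -((1 / L) • gv) := by rw [hc]; abel
    have e1 : ⟪f' b, c - b⟫ = -(1 / L) * ⟪f' b, gv⟫ := by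
      rw [hcb, inner_neg_right, real_inner_smul_right]; ring
    have e2 : ‖c - b‖ ^ 2 = (1 / L) ^ 2 * ‖gv‖ ^ 2 := by
      rw [hcb, norm_neg, norm_smul, Real.norm_eq_abs,
        abs_of_pos (by positivity : (0:ℝ) < 1 / L)]
      ring
    have e3 : ⟪f' a, c - a⟫ = ⟪f' a, b - a⟫ - (1 / L) * ⟪f' a, gv⟫ := by
      have : c - a = (b - a) - (1 / L) • gv := by rw [hc]; abel
      rw [this, inner_sub_right, real_inner_smul_right]
    have e4 : ⟪f' b, gv⟫ - ⟪f' a, gv⟫ = ‖gv‖ ^ 2 := by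
      rw [← inner_sub_left, ← hgv, real_inner_self_eq_norm_sq]
    rw [e1, e2] at h2
    rw [e3] at h1
    have e4' : 1 / L * ⟪f' b, gv⟫ - 1 / L * ⟪f' a, gv⟫ = 1 / L * ‖gv‖ ^ 2 := by
      rw [← mul_sub, e4]
    have e7 : L / 2 * ((1 / L) ^ 2 * ‖gv‖ ^ 2) = 1 / (2 * L) * ‖gv‖ ^ 2 := by
      field_simp
    have e9 : 1 / (2 * L) * ‖gv‖ ^ 2 + 1 / (2 * L) * ‖gv‖ ^ 2 = 1 / L * ‖gv‖ ^ 2 := by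
      field_simp; ring
    linarith
  have k1 := key x y
  have k2 := key y x
  have e5 : ⟪f' x, y - x⟫ + ⟪f' y, x - y⟫ = -⟪f' x - f' y, x - y⟫ := by
    rw [inner_sub_left]
    have : y - x = -(x - y) := by abel
    rw [this, inner_neg_right]
    ring
  have e6 : ‖f' y - f' x‖ = ‖f' x - f' y‖ := norm_sub_rev _ _
  rw [e6] at k1
  have e8 : 1 / (2 * L) * ‖f' x - f' y‖ ^ 2 + 1 / (2 * L) * ‖f' x - f' y‖ ^ 2
      = 1 / L * ‖f' x - f' y‖ ^ 2 := by field_simp; ring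
  linarith

lemma prox_finite' (f : E → EReal) (hbot : ∀ x, f x ≠ ⊥)
    (hproper : ∃ x, f x ≠ ⊤) {z p : E} (h : IsProxPt f z p) :
    f p ≠ ⊤ := by
  obtain ⟨x₁, hx₁⟩ := hproper
  have hle := h (Set.mem_univ x₁)
  simp only at hle
  intro htop
  rw [htop] at hle
  rw [EReal.top_add_coe] at hle
  have : f x₁ + ((1 / 2 * ‖x₁ - z‖ ^ 2 : ℝ) : EReal) ≠ ⊤ := by
    lift f x₁ to ℝ using ⟨hx₁, hbot x₁⟩ with c
    rw [← EReal.coe_add]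
    exact EReal.coe_ne_top _
  exact this (top_le_iff.1 hle)

/-- subgradient-type inequality for prox points -/
lemma prox_subgrad' (f : E → EReal) (hbot : ∀ x, f x ≠ ⊥)
    (hconv : ∀ t : ℝ, 0 < t → t < 1 → ∀ x y : E, f x ≠ ⊤ → f y ≠ ⊤ →
      f ((1 - t) • x + t • y) ≤ (((1 - t) * (f x).toReal + t * (f y).toReal : ℝ) : EReal))
    {z p q : E} (h : IsProxPt f z p) (hp : f p ≠ ⊤) (hq : f q ≠ ⊤) :
    (f p).toReal ≤ (f q).toReal + ⟪p - z, q - p⟫ := by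
  set c₁ := (f p).toReal with hc₁
  set c₂ := (f q).toReal with hc₂
  have key : ∀ t : ℝ, 0 < t → t < 1 → c₁ ≤ c₂ + ⟪p - z, q - p⟫ + t / 2 * ‖q - p‖ ^ 2 := by
    intro t ht0 ht1
    have hmin := h (Set.mem_univ ((1 - t) • p + t • q))
    simp only at hmin
    have hcv := hconv t ht0 ht1 p q hp hq
    set w := (1 - t) • p + t • q with hw
    have hne : w - z = (p - z) + t • (q - p) := by
      rw [hw]; module
    have hnorm : ‖w - z‖ ^ 2 = ‖p - z‖ ^ 2 + 2 * t * ⟪p - z, q - p⟫ + t ^ 2 * ‖q - p‖ ^ 2 := by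
      rw [hne, norm_add_sq_real, real_inner_smul_right, norm_smul, Real.norm_eq_abs,
        abs_of_pos ht0, mul_pow]
      ring
    have hfp : f p = (c₁ : EReal) := (EReal.coe_toReal hp (hbot p)).symm
    have step : ((c₁ + 1 / 2 * ‖p - z‖ ^ 2 : ℝ) : EReal) ≤
        (((1 - t) * c₁ + t * c₂ + 1 / 2 * ‖w - z‖ ^ 2 : ℝ) : EReal) := by
      calc ((c₁ + 1 / 2 * ‖p - z‖ ^ 2 : ℝ) : EReal)
          = f p + ((1 / 2 * ‖p - z‖ ^ 2 : ℝ) : EReal) := by rw [hfp, ← EReal.coe_add]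
        _ ≤ f w + ((1 / 2 * ‖w - z‖ ^ 2 : ℝ) : EReal) := hmin
        _ ≤ (((1 - t) * c₁ + t * c₂ : ℝ) : EReal) + ((1 / 2 * ‖w - z‖ ^ 2 : ℝ) : EReal) := by
            exact add_le_add_left hcv _
        _ = (((1 - t) * c₁ + t * c₂ + 1 / 2 * ‖w - z‖ ^ 2 : ℝ) : EReal) := by
            rw [← EReal.coe_add]
    rw [EReal.coe_le_coe_iff] at step
    rw [hnorm] at step
    nlinarith [step]
  by_contra hcon
  push_neg at hcon
  set ε := c₁ - (c₂ + ⟪p - z, q - p⟫) with hε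
  have hε0 : 0 < ε := by rw [hε]; linarith
  have hQ : (0:ℝ) ≤ ‖q - p‖ ^ 2 := sq_nonneg _
  set t := min (1/2) (ε / (‖q - p‖ ^ 2 + 1)) with htdef
  have ht0 : 0 < t := lt_min (by norm_num) (by positivity)
  have ht1 : t < 1 := lt_of_le_of_lt (min_le_left _ _) (by norm_num)
  have hk := key t ht0 ht1
  have htle : t ≤ ε / (‖q - p‖ ^ 2 + 1) := min_le_right _ _
  have : t / 2 * ‖q - p‖ ^ 2 < ε := by
    have h1 : t * (‖q - p‖ ^ 2 + 1) ≤ ε :=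
      (le_div_iff₀ (by positivity)).1 htle
    nlinarith
  linarith

lemma prox_firm' (f : E → EReal) (hbot : ∀ x, f x ≠ ⊥)
    (hconv : ∀ t : ℝ, 0 < t → t < 1 → ∀ x y : E, f x ≠ ⊤ → f y ≠ ⊤ →
      f ((1 - t) • x + t • y) ≤ (((1 - t) * (f x).toReal + t * (f y).toReal : ℝ) : EReal))
    (hproper : ∃ x, f x ≠ ⊤)
    {z₁ z₂ p₁ p₂ : E} (h₁ : IsProxPt f z₁ p₁) (h₂ : IsProxPt f z₂ p₂) :
    ‖p₁ - p₂‖ ^ 2 ≤ ⟪z₁ - z₂, p₁ - p₂⟫ := by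
  have hp₁ : f p₁ ≠ ⊤ := prox_finite' f hbot hproper h₁
  have hp₂ : f p₂ ≠ ⊤ := prox_finite' f hbot hproper h₂
  have s1 := prox_subgrad' f hbot hconv h₁ hp₁ hp₂
  have s2 := prox_subgrad' f hbot hconv h₂ hp₂ hp₁
  have e : ⟪p₁ - z₁, p₂ - p₁⟫ + ⟪p₂ - z₂, p₁ - p₂⟫
      = ⟪z₁ - z₂, p₁ - p₂⟫ - ‖p₁ - p₂‖ ^ 2 := by
    simp only [inner_sub_left, inner_sub_right, real_inner_self_eq_norm_sq]
    have c1 := real_inner_comm p₁ p₂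
    have c2 := real_inner_comm z₁ p₂
    have c3 := real_inner_comm z₂ p₁
    have n1 : ⟪p₁, p₁⟫ = ‖p₁‖ ^ 2 := real_inner_self_eq_norm_sq p₁
    have n2 : ⟪p₂, p₂⟫ = ‖p₂‖ ^ 2 := real_inner_self_eq_norm_sq p₂
    have n3 : ‖p₁ - p₂‖ ^ 2 = ‖p₁‖ ^ 2 - 2 * ⟪p₁, p₂⟫ + ‖p₂‖ ^ 2 :=
      norm_sub_sq_real p₁ p₂
    rw [n3]
    linarith
  linarith [s1, s2, e]

lemma scaled_hbot' (α : ℝ) (hα : 0 < α) (r : E → EReal) (hr : ClosedConvexProper r) :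
    ∀ x, (α : EReal) * r x ≠ ⊥ := by
  intro x
  by_cases hx : r x = ⊤
  · rw [hx, EReal.coe_mul_top_of_pos hα]
    simp
  · lift r x to ℝ using ⟨hx, hr.2.2.1 x⟩ with c
    rw [← EReal.coe_mul]
    exact EReal.coe_ne_bot _

lemma scaled_hproper' (α : ℝ) (hα : 0 < α) (r : E → EReal) (hr : ClosedConvexProper r) :
    ∃ x, (α : EReal) * r x ≠ ⊤ := by
  obtain ⟨x, hx⟩ := hr.2.2.2
  refine ⟨x, ?_⟩
  lift r x to ℝ using ⟨hx, hr.2.2.1 x⟩ with c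
  rw [← EReal.coe_mul]
  exact EReal.coe_ne_top _

lemma scaled_hconv' (α : ℝ) (hα : 0 < α) (r : E → EReal) (hr : ClosedConvexProper r) :
    ∀ t : ℝ, 0 < t → t < 1 → ∀ x y : E,
      (α : EReal) * r x ≠ ⊤ → (α : EReal) * r y ≠ ⊤ →
      (α : EReal) * r ((1 - t) • x + t • y) ≤
        (((1 - t) * ((α : EReal) * r x).toReal + t * ((α : EReal) * r y).toReal : ℝ) : EReal) := by
  intro t ht0 ht1 x y hx hy
  have hrx : r x ≠ ⊤ := by
    intro h; rw [h, EReal.coe_mul_top_of_pos hα] at hx; exact hx rfl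
  have hry : r y ≠ ⊤ := by
    intro h; rw [h, EReal.coe_mul_top_of_pos hα] at hy; exact hy rfl
  lift r x to ℝ using ⟨hrx, hr.2.2.1 x⟩ with cx hcx
  lift r y to ℝ using ⟨hry, hr.2.2.1 y⟩ with cy hcy
  have hcv := hr.2.1 (1 - t) t x y (by linarith) (by linarith) (by ring)
  rw [← hcx, ← hcy] at hcv
  rw [← EReal.coe_mul, ← EReal.coe_mul, ← EReal.coe_add] at hcv
  have hcomb_ne_top : r ((1 - t) • x + t • y) ≠ ⊤ :=
    ne_top_of_le_ne_top (EReal.coe_ne_top _) hcv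
  lift r ((1 - t) • x + t • y) to ℝ using ⟨hcomb_ne_top, hr.2.2.1 _⟩ with s hs
  rw [EReal.coe_le_coe_iff] at hcv
  rw [← EReal.coe_mul, ← EReal.coe_mul, ← EReal.coe_mul,
    EReal.toReal_coe, EReal.toReal_coe, EReal.coe_le_coe_iff]
  nlinarith [mul_le_mul_of_nonneg_left hcv hα.le]

end Helpers

/-- Combined cocoercivity inequality for the PPG residual operator. -/
theorem stmt11
    {d : ℕ} (α : ℝ) (hα : 0 < α)
    (r g : EuclideanSpace ℝ (Fin d) → EReal)
    (hr : ClosedConvexProper r) (hg : ClosedConvexProper g)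
    (f : EuclideanSpace ℝ (Fin d) → ℝ) (hfconv : ConvexOn ℝ Set.univ f)
    (f' : EuclideanSpace ℝ (Fin d) → EuclideanSpace ℝ (Fin d))
    (hf' : ∀ x, HasGradientAt f (f' x) x)
    (Pr Pg : EuclideanSpace ℝ (Fin d) → EuclideanSpace ℝ (Fin d))
    (hPr : ∀ w, IsProxPt (fun x => (α : EReal) * r x) w (Pr w))
    (hPg : ∀ w, IsProxPt (fun x => (α : EReal) * g x) w (Pg w))
    (P : EuclideanSpace ℝ (Fin d) → EuclideanSpace ℝ (Fin d))
    (hP : ∀ z, P z = α⁻¹ • (Pr z - Pg ((2 : ℝ) • Pr z - z - α • f' (Pr z))))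
    (L : ℝ) (hL : 0 < L)
    (hLip : ∀ x y, ‖f' x - f' y‖ ≤ L * ‖x - y‖)
    (hαL : α < 3 / (2 * L)) :
    ∀ z zt : EuclideanSpace ℝ (Fin d),
      -⟪P z - P zt, z - zt⟫ ≤
        α * (α * L / 3 - 1) * ‖P z - P zt‖ ^ 2 -
          1 / (4 * L) * ‖f' (Pr z) - f' (Pr zt)‖ ^ 2 := by
  intro z zt
  have A1 := prox_firm' (fun x => (α : EReal) * r x) (scaled_hbot' α hα r hr)
    (scaled_hconv' α hα r hr) (scaled_hproper' α hα r hr) (hPr z) (hPr zt)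
  have A2 := prox_firm' (fun x => (α : EReal) * g x) (scaled_hbot' α hα g hg)
    (scaled_hconv' α hα g hg) (scaled_hproper' α hα g hg)
    (hPg ((2 : ℝ) • Pr z - z - α • f' (Pr z)))
    (hPg ((2 : ℝ) • Pr zt - zt - α • f' (Pr zt)))
  have A3 := baillon_haddad' f hfconv f' hf' L hL hLip (Pr z) (Pr zt)
  set X := Pr z - Pr zt with hX
  set Y := Pg ((2 : ℝ) • Pr z - z - α • f' (Pr z)) -
    Pg ((2 : ℝ) • Pr zt - zt - α • f' (Pr zt)) with hY
  set G := f' (Pr z) - f' (Pr zt) with hG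
  set u := z - zt with hu
  set Δp := P z - P zt with hD
  -- X - Y = α • Δp
  have hXY : X - Y = α • Δp := by
    have h1 : α • Δp = (Pr z - Pg ((2 : ℝ) • Pr z - z - α • f' (Pr z))) -
        (Pr zt - Pg ((2 : ℝ) • Pr zt - zt - α • f' (Pr zt))) := by
      rw [hD, hP z, hP zt, smul_sub, smul_inv_smul₀ hα.ne', smul_inv_smul₀ hα.ne']
    rw [h1, hX, hY]
    abel
  -- w - wt = 2X - u - αG
  have hww : ((2 : ℝ) • Pr z - z - α • f' (Pr z)) -
      ((2 : ℝ) • Pr zt - zt - α • f' (Pr zt)) = (2 : ℝ) • X - u - α • G := by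
    rw [hX, hu, hG]; module
  rw [hww] at A2
  have hexp : ⟪(2 : ℝ) • X - u - α • G, Y⟫ = 2 * ⟪X, Y⟫ - ⟪u, Y⟫ - α * ⟪G, Y⟫ := by
    rw [inner_sub_left, inner_sub_left, real_inner_smul_left, real_inner_smul_left]
  rw [hexp] at A2
  have eq4 : Y = X - α • Δp := by rw [← hXY]; abel
  have eq5 : ⟪G, Y⟫ = ⟪G, X⟫ - α * ⟪G, Δp⟫ := by
    rw [eq4, inner_sub_right, real_inner_smul_right]
  have eq5' : α * ⟪G, Y⟫ = α * ⟪G, X⟫ - α ^ 2 * ⟪G, Δp⟫ := by rw [eq5]; ring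
  have eq13 : ⟪u, X⟫ - ⟪u, Y⟫ = α * ⟪u, Δp⟫ := by
    rw [← inner_sub_right, hXY, real_inner_smul_right]
  have eq6 : ‖X - Y‖ ^ 2 = ‖X‖ ^ 2 - 2 * ⟪X, Y⟫ + ‖Y‖ ^ 2 := norm_sub_sq_real X Y
  have eq7 : ‖X - Y‖ ^ 2 = α ^ 2 * ‖Δp‖ ^ 2 := by
    rw [hXY, norm_smul, Real.norm_eq_abs, abs_of_pos hα, mul_pow]
  have F1 : α ^ 2 * ‖Δp‖ ^ 2 + α * ⟪G, X⟫ - α ^ 2 * ⟪G, Δp⟫ ≤ α * ⟪u, Δp⟫ := by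
    linarith [A1, A2, eq5', eq13, eq6, eq7]
  have F2 : α * (1 / L * ‖G‖ ^ 2) ≤ α * ⟪G, X⟫ := mul_le_mul_of_nonneg_left A3 hα.le
  have H3 : (0:ℝ) ≤ ‖G - (2 * α * L / 3) • Δp‖ ^ 2 := sq_nonneg _
  have H3e : ‖G - (2 * α * L / 3) • Δp‖ ^ 2 =
      ‖G‖ ^ 2 - 2 * (2 * α * L / 3) * ⟪G, Δp⟫ + (2 * α * L / 3) ^ 2 * ‖Δp‖ ^ 2 := by
    rw [norm_sub_sq_real, real_inner_smul_right, norm_smul, Real.norm_eq_abs,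
      abs_of_pos (by positivity : (0:ℝ) < 2 * α * L / 3), mul_pow]
    ring
  rw [H3e] at H3
  have F3 : (0:ℝ) ≤ 3 * α / (4 * L) * ‖G‖ ^ 2 - α ^ 2 * ⟪G, Δp⟫ + α ^ 3 * L / 3 * ‖Δp‖ ^ 2 := by
    have hpos : (0:ℝ) ≤ 3 * α / (4 * L) := by positivity
    have hmul := mul_nonneg hpos H3
    have heq : 3 * α / (4 * L) *
        (‖G‖ ^ 2 - 2 * (2 * α * L / 3) * ⟪G, Δp⟫ + (2 * α * L / 3) ^ 2 * ‖Δp‖ ^ 2)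
        = 3 * α / (4 * L) * ‖G‖ ^ 2 - α ^ 2 * ⟪G, Δp⟫ + α ^ 3 * L / 3 * ‖Δp‖ ^ 2 := by
      field_simp
      ring
    rw [heq] at hmul
    exact hmul
  have hcomm : ⟪Δp, u⟫ = ⟪u, Δp⟫ := real_inner_comm _ _
  rw [← mul_le_mul_iff_right₀ hα]
  have hgoal : α * (α * (α * L / 3 - 1) * ‖Δp‖ ^ 2 - 1 / (4 * L) * ‖G‖ ^ 2)
      = α ^ 3 * L / 3 * ‖Δp‖ ^ 2 - α ^ 2 * ‖Δp‖ ^ 2 - α * (1 / L * ‖G‖ ^ 2)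
        + (3 * α / (4 * L) * ‖G‖ ^ 2) := by
    field_simp
    ring
  rw [hgoal]
  have hLhs : α * -⟪Δp, u⟫ = -(α * ⟪u, Δp⟫) := by rw [hcomm]; ring
  rw [hLhs]
  linarith [F1, F2, F3]
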